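/- Down-and-out call price via the joint density of drifted Brownian motion and its running minimum: let S₀, K, T, σ > 0, r_d, r_f ∈ ℝ, and 0 < B < min(S₀, K). Set θ = (r_d − r_f − σ²/2)/σ, b = (1/σ)·ln(B/S₀), and for y ≤ min(0, x) set f(x,y) = −e^{θx − θ²T/2} · (2(2y − x)/(T√(2πT))) · e^{−(2y−x)²/(2T)}. Then e^{-r_d T} · ∫_{x ∈ ℝ} ∫_{y ∈ (b, min(0,x)]} max(S₀ e^{σx} − K, 0) · f(x,y) dy dx = 𝒜 − 𝒞, where 𝒜 = S₀ e^{-r_f T} N(x₁) − K e^{-r_d T} N(x₁ − σ√T) with x₁ = ln(S₀/K)/(σ√T) + (1+α)σ√T, 𝒞 = S₀ e^{-r_f T} (B/S₀)^{2(α+1)} N(y₁) − K e^{-r_d T} (B/S₀)^{2α} N(y₁ − σ√T) with y₁ = ln(B²/(S₀K))/(σ√T) + (1+α)σ√T, and α = (r_d − r_f − σ²/2)/σ². -/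

import Mathlib

open MeasureTheory Set Real

noncomputable def stdNormalCdf (z : ℝ) : ℝ :=
  ∫ x in Set.Iic z, (1 / Real.sqrt (2 * Real.pi)) * Real.exp (-x ^ 2 / 2)

lemma gauss_integrable {T : ℝ} (hT : 0 < T) (c μ : ℝ) :
    Integrable (fun x : ℝ => (1 / Real.sqrt (2 * Real.pi * T)) *
      Real.exp (c - (x - μ) ^ 2 / (2 * T))) := by
  have h1 : Integrable (fun x : ℝ => Real.exp (-(1 / (2 * T)) * x ^ 2)) :=
    integrable_exp_neg_mul_sq (by positivity)
  have h2 := (h1.comp_sub_right μ).const_mul ((1 / Real.sqrt (2 * Real.pi * T)) * Real.exp c)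
  convert h2 using 2 with x
  have h3 : Real.exp c * Real.exp (-(1 / (2 * T)) * (x - μ) ^ 2)
      = Real.exp (c - (x - μ) ^ 2 / (2 * T)) := by
    rw [← Real.exp_add]; congr 1; field_simp; ring
  rw [← h3]; ring

lemma gauss_tail {T : ℝ} (hT : 0 < T) (c μ k : ℝ) :
    ∫ x in Set.Ioi k, (1 / Real.sqrt (2 * Real.pi * T)) * Real.exp (c - (x - μ) ^ 2 / (2 * T))
      = Real.exp c * stdNormalCdf ((μ - k) / Real.sqrt T) := by
  have hs : (0:ℝ) < Real.sqrt T := Real.sqrt_pos.mpr hT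
  set r := Real.sqrt T with hrdef
  set z := (μ - k) / r with hz
  have hsz : r * z = μ - k := by rw [hz]; exact mul_div_cancel₀ _ hs.ne'
  have himg : (fun u : ℝ => μ - r * u) '' Set.Iic z = Set.Ici k := by
    ext x
    simp only [Set.mem_image, Set.mem_Iic, Set.mem_Ici]
    constructor
    · rintro ⟨u, hu, rfl⟩
      nlinarith [mul_le_mul_of_nonneg_left hu hs.le]
    · intro hx
      refine ⟨(μ - x) / r, ?_, by field_simp; ring⟩
      rw [hz, div_le_div_iff_of_pos_right hs]; linarith
  have key := integral_image_eq_integral_abs_deriv_smul (s := Set.Iic z)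
      (f := fun u : ℝ => μ - r * u) (f' := fun _ => -r) measurableSet_Iic
      (fun x _ => by
        simpa using (((hasDerivAt_id x).const_mul r).const_sub μ).hasDerivWithinAt)
      (fun a _ b _ h => by
        have h' : r * a = r * b := by simp only at h; linarith
        exact mul_left_cancel₀ hs.ne' h')
      (fun x => (1 / Real.sqrt (2 * Real.pi * T)) * Real.exp (c - (x - μ) ^ 2 / (2 * T)))
  rw [himg] at key
  rw [← MeasureTheory.integral_Ici_eq_integral_Ioi, key]
  have hsq : r ^ 2 = T := Real.sq_sqrt hT.le
  have h2pi : Real.sqrt (2 * Real.pi * T) = Real.sqrt (2 * Real.pi) * r := by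
    rw [hrdef, ← Real.sqrt_mul (by positivity)]
  have heq : ∀ u : ℝ, |(-r)| • ((1 / Real.sqrt (2 * Real.pi * T)) *
        Real.exp (c - (μ - r * u - μ) ^ 2 / (2 * T)))
      = Real.exp c * ((1 / Real.sqrt (2 * Real.pi)) * Real.exp (-u ^ 2 / 2)) := by
    intro u
    rw [abs_neg, abs_of_pos hs, smul_eq_mul, h2pi]
    have he : c - (μ - r * u - μ) ^ 2 / (2 * T) = c + (-u ^ 2 / 2) := by
      have h3 : (μ - r * u - μ) ^ 2 = T * u ^ 2 := by rw [← hsq]; ring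
      rw [h3]; field_simp; ring
    rw [he, Real.exp_add]
    have : Real.sqrt (2 * Real.pi) ≠ 0 := by positivity
    field_simp
  simp_rw [heq]
  rw [MeasureTheory.integral_const_mul, stdNormalCdf]

lemma inner_int {T : ℝ} (hT : 0 < T) (A x b : ℝ) (hb : b ≤ min 0 x) :
    ∫ y in Set.Ioc b (min 0 x),
      (-Real.exp A * (2 * (2 * y - x) / (T * Real.sqrt (2 * Real.pi * T))) *
        Real.exp (-(2 * y - x) ^ 2 / (2 * T)))
    = Real.exp A / Real.sqrt (2 * Real.pi * T) *
        (Real.exp (-x ^ 2 / (2 * T)) - Real.exp (-(2 * b - x) ^ 2 / (2 * T))) := by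
  have hpi : (0:ℝ) < Real.sqrt (2 * Real.pi * T) := Real.sqrt_pos.mpr (by positivity)
  set m := min 0 x with hm
  set G : ℝ → ℝ := fun y => Real.exp A / Real.sqrt (2 * Real.pi * T) *
      Real.exp (-(2 * y - x) ^ 2 / (2 * T)) with hG
  have hderiv : ∀ y : ℝ, HasDerivAt G
      (-Real.exp A * (2 * (2 * y - x) / (T * Real.sqrt (2 * Real.pi * T))) *
        Real.exp (-(2 * y - x) ^ 2 / (2 * T))) y := by
    intro y
    have h1 : HasDerivAt (fun y : ℝ => 2 * y - x) 2 y := by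
      simpa using ((hasDerivAt_id y).const_mul 2).sub_const x
    have h2 : HasDerivAt (fun y : ℝ => -(2 * y - x) ^ 2 / (2 * T))
        (-(2 * (2 * y - x) ^ 1 * 2) / (2 * T)) y := ((h1.pow 2).neg).div_const (2 * T)
    have h3 := (h2.exp).const_mul (Real.exp A / Real.sqrt (2 * Real.pi * T))
    exact h3.congr_deriv (by ring)
  rw [← intervalIntegral.integral_of_le hb]
  rw [intervalIntegral.integral_eq_sub_of_hasDerivAt (fun y _ => hderiv y) ?_]
  · have hmx : (2 * m - x) ^ 2 = x ^ 2 := by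
      rcases le_total x 0 with h | h
      · rw [hm, min_eq_right h]; ring
      · rw [hm, min_eq_left h]; ring
    rw [hG]
    simp only [hmx]
    ring
  · apply Continuous.intervalIntegrable
    continuity

set_option maxHeartbeats 1000000 in
/-- Down-and-out call price via the joint density of drifted Brownian motion and its
running minimum: the discounted double integral of the payoff against the joint density
equals `𝒜 - 𝒞`. -/
theorem down_and_out_call_price (S₀ K T σ rd rf B : ℝ)
    (hS : 0 < S₀) (hK : 0 < K) (hT : 0 < T) (hσ : 0 < σ)
    (hB0 : 0 < B) (hB : B < min S₀ K)
    (α x₁ y₁ : ℝ)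
    (hα : α = (rd - rf - σ ^ 2 / 2) / σ ^ 2)
    (hx₁ : x₁ = Real.log (S₀ / K) / (σ * Real.sqrt T) + (1 + α) * (σ * Real.sqrt T))
    (hy₁ : y₁ = Real.log (B ^ 2 / (S₀ * K)) / (σ * Real.sqrt T) + (1 + α) * (σ * Real.sqrt T)) :
    Real.exp (-rd * T) *
        (∫ x : ℝ, ∫ y in Set.Ioc ((1 / σ) * Real.log (B / S₀)) (min 0 x),
          max (S₀ * Real.exp (σ * x) - K) 0 *
            (-Real.exp (((rd - rf - σ ^ 2 / 2) / σ) * x -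
                  ((rd - rf - σ ^ 2 / 2) / σ) ^ 2 * T / 2) *
              (2 * (2 * y - x) / (T * Real.sqrt (2 * Real.pi * T))) *
              Real.exp (-(2 * y - x) ^ 2 / (2 * T)))) =
      (S₀ * Real.exp (-rf * T) * stdNormalCdf x₁ -
          K * Real.exp (-rd * T) * stdNormalCdf (x₁ - σ * Real.sqrt T)) -
        (S₀ * Real.exp (-rf * T) * (B / S₀) ^ (2 * (α + 1)) * stdNormalCdf y₁ -
          K * Real.exp (-rd * T) * (B / S₀) ^ (2 * α) * stdNormalCdf (y₁ - σ * Real.sqrt T)) := by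
  have hBS : B < S₀ := lt_of_lt_of_le hB (min_le_left _ _)
  have hBK : B < K := lt_of_lt_of_le hB (min_le_right _ _)
  have hrT : (0:ℝ) < Real.sqrt T := Real.sqrt_pos.mpr hT
  have hsqT : Real.sqrt T ^ 2 = T := Real.sq_sqrt hT.le
  set θ := (rd - rf - σ ^ 2 / 2) / σ with hθ
  set bb := (1 / σ) * Real.log (B / S₀) with hbb
  set k := Real.log (K / S₀) / σ with hk
  have hlogB : Real.log (B / S₀) = Real.log B - Real.log S₀ := Real.log_div hB0.ne' hS.ne'
  have hlogK : Real.log (K / S₀) = Real.log K - Real.log S₀ := Real.log_div hK.ne' hS.ne'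
  have hbk : bb < k := by
    rw [hbb, hk, hlogB, hlogK]
    have : Real.log B < Real.log K := Real.log_lt_log hB0 hBK
    rw [one_div, inv_mul_eq_div, div_lt_div_iff_of_pos_right hσ]
    linarith
  have hb0 : bb < 0 := by
    rw [hbb]
    have h1 : Real.log (B / S₀) < 0 := Real.log_neg (by positivity) ((div_lt_one hS).mpr hBS)
    have h2 : (0:ℝ) < 1 / σ := by positivity
    exact mul_neg_of_pos_of_neg h2 h1
  -- payoff is zero for x ≤ k
  have hpay0 : ∀ x : ℝ, x ≤ k → max (S₀ * Real.exp (σ * x) - K) 0 = 0 := by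
    intro x hx
    apply max_eq_right
    have h1 : σ * x ≤ Real.log (K / S₀) := by
      rw [hk] at hx
      calc σ * x ≤ σ * (Real.log (K / S₀) / σ) := by nlinarith
        _ = Real.log (K / S₀) := by field_simp
    have h2 : Real.exp (σ * x) ≤ K / S₀ := by
      calc Real.exp (σ * x) ≤ Real.exp (Real.log (K / S₀)) := Real.exp_le_exp.mpr h1
        _ = K / S₀ := Real.exp_log (by positivity)
    have := mul_le_mul_of_nonneg_left h2 hS.le
    rw [mul_div_cancel₀ _ hS.ne'] at this
    linarith
  -- the value of the inner integral
  set H : ℝ → ℝ := fun x => max (S₀ * Real.exp (σ * x) - K) 0 *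
      (Real.exp (θ * x - θ ^ 2 * T / 2) / Real.sqrt (2 * Real.pi * T) *
        (Real.exp (-x ^ 2 / (2 * T)) - Real.exp (-(2 * bb - x) ^ 2 / (2 * T)))) with hH
  have hinner : ∀ x : ℝ,
      (∫ y in Set.Ioc bb (min 0 x),
        max (S₀ * Real.exp (σ * x) - K) 0 *
          (-Real.exp (θ * x - θ ^ 2 * T / 2) *
            (2 * (2 * y - x) / (T * Real.sqrt (2 * Real.pi * T))) *
            Real.exp (-(2 * y - x) ^ 2 / (2 * T)))) = H x := by
    intro x
    rw [MeasureTheory.integral_const_mul]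
    rcases le_or_gt (min 0 x) bb with h | h
    · have hx0 : x ≤ 0 := by
        by_contra hc
        push_neg at hc
        rw [min_eq_left hc.le] at h
        linarith
      have hxk : x ≤ k := by
        have := min_eq_right hx0 ▸ h
        linarith
      rw [hH]
      simp only [hpay0 x hxk, zero_mul]
    · rw [inner_int hT (θ * x - θ ^ 2 * T / 2) x bb h.le, hH]
  simp only [hinner]
  -- restrict to Ioi k
  rw [← MeasureTheory.setIntegral_eq_integral_of_forall_compl_eq_zero
      (s := Set.Ioi k) (f := H) (fun x hx => by
        rw [hH]; simp only [hpay0 x (not_lt.mp (by simpa using hx)), zero_mul])]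
  -- abbreviations for the four Gaussian pieces
  have hθα : θ = α * σ := by rw [hθ, hα]; field_simp
  set c1 := (σ ^ 2 / 2 + θ * σ) * T with hc1d
  set μ1 := (θ + σ) * T with hμ1d
  set μ2 := θ * T with hμ2d
  set c3 := 2 * bb * (θ + σ) + (σ ^ 2 / 2 + θ * σ) * T with hc3d
  set μ3 := 2 * bb + (θ + σ) * T with hμ3d
  set c4 := 2 * bb * θ with hc4d
  set μ4 := 2 * bb + θ * T with hμ4d
  have hEq : Set.EqOn H (fun x =>
      S₀ * ((1 / Real.sqrt (2 * Real.pi * T)) * Real.exp (c1 - (x - μ1) ^ 2 / (2 * T)))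
      - K * ((1 / Real.sqrt (2 * Real.pi * T)) * Real.exp (0 - (x - μ2) ^ 2 / (2 * T)))
      - (S₀ * ((1 / Real.sqrt (2 * Real.pi * T)) * Real.exp (c3 - (x - μ3) ^ 2 / (2 * T)))
      - K * ((1 / Real.sqrt (2 * Real.pi * T)) * Real.exp (c4 - (x - μ4) ^ 2 / (2 * T)))))
      (Set.Ioi k) := by
    intro x hx
    have h1 : Real.log (K / S₀) < σ * x := by
      have hx' : k < x := hx
      rw [hk, div_lt_iff₀ hσ] at hx'
      linarith [hx']
    have h2 : K / S₀ < Real.exp (σ * x) := by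
      calc K / S₀ = Real.exp (Real.log (K / S₀)) := (Real.exp_log (by positivity)).symm
        _ < Real.exp (σ * x) := Real.exp_lt_exp.mpr h1
    have h3 : K < S₀ * Real.exp (σ * x) := by
      have := mul_lt_mul_of_pos_left h2 hS
      rwa [mul_div_cancel₀ _ hS.ne'] at this
    have e1 : Real.exp (c1 - (x - μ1) ^ 2 / (2 * T))
        = Real.exp (σ * x) * Real.exp (θ * x - θ ^ 2 * T / 2) * Real.exp (-x ^ 2 / (2 * T)) := by
      rw [← Real.exp_add, ← Real.exp_add]
      congr 1
      rw [hc1d, hμ1d]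
      field_simp
      ring
    have e2 : Real.exp (0 - (x - μ2) ^ 2 / (2 * T))
        = Real.exp (θ * x - θ ^ 2 * T / 2) * Real.exp (-x ^ 2 / (2 * T)) := by
      rw [← Real.exp_add]
      congr 1
      rw [hμ2d]
      field_simp
      ring
    have e3 : Real.exp (c3 - (x - μ3) ^ 2 / (2 * T))
        = Real.exp (σ * x) * Real.exp (θ * x - θ ^ 2 * T / 2) *
          Real.exp (-(2 * bb - x) ^ 2 / (2 * T)) := by
      rw [← Real.exp_add, ← Real.exp_add]
      congr 1
      rw [hc3d, hμ3d]
      field_simp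
      ring
    have e4 : Real.exp (c4 - (x - μ4) ^ 2 / (2 * T))
        = Real.exp (θ * x - θ ^ 2 * T / 2) * Real.exp (-(2 * bb - x) ^ 2 / (2 * T)) := by
      rw [← Real.exp_add]
      congr 1
      rw [hc4d, hμ4d]
      field_simp
      ring
    simp only [hH]
    rw [max_eq_left (by linarith), e1, e2, e3, e4]
    have hR : Real.sqrt (2 * Real.pi * T) ≠ 0 := by positivity
    field_simp
  rw [MeasureTheory.setIntegral_congr_fun measurableSet_Ioi hEq]
  have hi : ∀ c μ : ℝ, MeasureTheory.IntegrableOn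
      (fun x => (1 / Real.sqrt (2 * Real.pi * T)) * Real.exp (c - (x - μ) ^ 2 / (2 * T)))
      (Set.Ioi k) := fun c μ => (gauss_integrable hT c μ).integrableOn
  rw [MeasureTheory.integral_sub
      (f := fun x => S₀ * ((1 / Real.sqrt (2 * Real.pi * T)) * Real.exp (c1 - (x - μ1) ^ 2 / (2 * T)))
        - K * ((1 / Real.sqrt (2 * Real.pi * T)) * Real.exp (0 - (x - μ2) ^ 2 / (2 * T))))
      (g := fun x => S₀ * ((1 / Real.sqrt (2 * Real.pi * T)) * Real.exp (c3 - (x - μ3) ^ 2 / (2 * T)))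
        - K * ((1 / Real.sqrt (2 * Real.pi * T)) * Real.exp (c4 - (x - μ4) ^ 2 / (2 * T))))
      (((hi c1 μ1).const_mul S₀).sub ((hi 0 μ2).const_mul K))
      (((hi c3 μ3).const_mul S₀).sub ((hi c4 μ4).const_mul K)),
    MeasureTheory.integral_sub
      (f := fun x => S₀ * ((1 / Real.sqrt (2 * Real.pi * T)) * Real.exp (c1 - (x - μ1) ^ 2 / (2 * T))))
      (g := fun x => K * ((1 / Real.sqrt (2 * Real.pi * T)) * Real.exp (0 - (x - μ2) ^ 2 / (2 * T))))
      ((hi c1 μ1).const_mul S₀) ((hi 0 μ2).const_mul K),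
    MeasureTheory.integral_sub
      (f := fun x => S₀ * ((1 / Real.sqrt (2 * Real.pi * T)) * Real.exp (c3 - (x - μ3) ^ 2 / (2 * T))))
      (g := fun x => K * ((1 / Real.sqrt (2 * Real.pi * T)) * Real.exp (c4 - (x - μ4) ^ 2 / (2 * T))))
      ((hi c3 μ3).const_mul S₀) ((hi c4 μ4).const_mul K),
    MeasureTheory.integral_const_mul S₀
      (fun x => (1 / Real.sqrt (2 * Real.pi * T)) * Real.exp (c1 - (x - μ1) ^ 2 / (2 * T))),
    MeasureTheory.integral_const_mul K
      (fun x => (1 / Real.sqrt (2 * Real.pi * T)) * Real.exp (0 - (x - μ2) ^ 2 / (2 * T))),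
    MeasureTheory.integral_const_mul S₀
      (fun x => (1 / Real.sqrt (2 * Real.pi * T)) * Real.exp (c3 - (x - μ3) ^ 2 / (2 * T))),
    MeasureTheory.integral_const_mul K
      (fun x => (1 / Real.sqrt (2 * Real.pi * T)) * Real.exp (c4 - (x - μ4) ^ 2 / (2 * T))),
    gauss_tail hT c1 μ1 k, gauss_tail hT 0 μ2 k, gauss_tail hT c3 μ3 k, gauss_tail hT c4 μ4 k]
  -- identify the cdf arguments
  have hlogSK : Real.log (S₀ / K) = Real.log S₀ - Real.log K := Real.log_div hS.ne' hK.ne'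
  have hlogB2 : Real.log (B ^ 2 / (S₀ * K)) = 2 * Real.log B - Real.log S₀ - Real.log K := by
    rw [Real.log_div (by positivity) (by positivity), Real.log_mul hS.ne' hK.ne',
      Real.log_pow]
    push_cast
    ring
  have ha1 : (μ1 - k) / Real.sqrt T = x₁ := by
    rw [hμ1d, hθα, hx₁, hk, hlogK, hlogSK]
    have h := hsqT
    set rT := Real.sqrt T with hrT2
    rw [← h]
    field_simp
    ring
  have ha2 : (μ2 - k) / Real.sqrt T = x₁ - σ * Real.sqrt T := by
    rw [hμ2d, hθα, hx₁, hk, hlogK, hlogSK]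
    have h := hsqT
    set rT := Real.sqrt T with hrT2
    rw [← h]
    field_simp
    ring
  have ha3 : (μ3 - k) / Real.sqrt T = y₁ := by
    rw [hμ3d, hθα, hy₁, hk, hbb, hlogK, hlogB, hlogB2]
    have h := hsqT
    set rT := Real.sqrt T with hrT2
    rw [← h]
    field_simp
    ring
  have ha4 : (μ4 - k) / Real.sqrt T = y₁ - σ * Real.sqrt T := by
    rw [hμ4d, hθα, hy₁, hk, hbb, hlogK, hlogB, hlogB2]
    have h := hsqT
    set rT := Real.sqrt T with hrT2
    rw [← h]
    field_simp
    ring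
  rw [ha1, ha2, ha3, ha4, Real.exp_zero]
  -- identify the constants
  have hC1 : Real.exp (-rd * T) * Real.exp c1 = Real.exp (-rf * T) := by
    rw [← Real.exp_add]
    congr 1
    rw [hc1d, hθ]
    field_simp
    ring
  have hC3 : Real.exp (-rd * T) * Real.exp c3
      = Real.exp (-rf * T) * (B / S₀) ^ (2 * (α + 1)) := by
    rw [Real.rpow_def_of_pos (by positivity), ← Real.exp_add, ← Real.exp_add]
    congr 1
    rw [hc3d, hbb, hθ, hα]
    field_simp
    ring
  have hC4 : Real.exp c4 = (B / S₀) ^ (2 * α) := by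
    rw [Real.rpow_def_of_pos (by positivity)]
    congr 1
    rw [hc4d, hbb, hθ, hα]
    field_simp
  linear_combination (S₀ * stdNormalCdf x₁) * hC1 - (S₀ * stdNormalCdf y₁) * hC3 +
    (K * stdNormalCdf (y₁ - σ * Real.sqrt T) * Real.exp (-rd * T)) * hC4
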